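/- Let (α_n)_{n=0}^∞ be real numbers with α_0 = 0, let n ∈ ℤ_{≥0}, and let a be a bounded linear operator on L^p(μ_{≥0}) that is supported on coordinates ≤ n, meaning there exists a bounded linear operator c on L^p(μ_{≤n}) such that for all ξ ∈ L^p(μ_{≤n}) and η ∈ L^p(μ_{≥n+1}), a maps the product function (x_0,…,x_n,𝐱) ↦ ξ(x_0,…,x_n)η(𝐱) to the product function (x_0,…,x_n,𝐱) ↦ (cξ)(x_0,…,x_n)η(𝐱). Then: (i) a maps range(P_m) into range(P_m) for every m ≥ n, so a maps the domain 𝒟 = ⋃_m range(P_m) into itself; (ii) for every η ∈ 𝒟, D(aη) − a(Dη) = Σ_{k=1}^n α_k (Q_k(aη) − a(Q_kη)), where Dζ = Σ_{m=1}^∞ α_m Q_m ζ (a finite sum for ζ ∈ 𝒟); and (iii) there exists C ≥ 0 such that ‖D(aη) − a(Dη)‖_p ≤ C‖η‖_p for all η ∈ 𝒟, i.e., the commutator [D, a] is bounded on 𝒟. -/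

import Mathlib

noncomputable section
open MeasureTheory Filter
open scoped ENNReal Topology

/-- A measure `ν` on a product space is *the* product of the measures `m i` if it assigns
the product value to every finite-dimensional cylinder set. -/
def IsProductMeasure {ι : Type*} {Y : ι → Type*} [∀ i, MeasurableSpace (Y i)]
    (m : ∀ i, Measure (Y i)) (ν : Measure (∀ i, Y i)) : Prop :=
  ∀ (F : Finset ι) (s : ∀ i, Set (Y i)), (∀ i, MeasurableSet (s i)) →
    ν {x | ∀ i ∈ F, x i ∈ s i} = ∏ i ∈ F, m i (s i)

variable {X : ℕ → Type*}

/-- The product measure `μ_{≤ n}` on `X_0 × ⋯ × X_n`. -/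
def muLe [∀ j, MeasurableSpace (X j)] (μ : ∀ j, Measure (X j)) (n : ℕ) :
    Measure (∀ j : Fin (n + 1), X j) :=
  Measure.pi (fun j => μ j)

/-- Splicing a point of `X_{≤ n}` with a point of `X_{≥ n+1}` gives a point of `X_{≥ 0}`. -/
def splice (n : ℕ) (x : ∀ j : Fin (n + 1), X j) (y : ∀ j : ℕ, X (n + 1 + j)) :
    ∀ j : ℕ, X j := fun j =>
  if h : j < n + 1 then x ⟨j, h⟩
  else cast (congrArg X (by omega : n + 1 + (j - (n + 1)) = j)) (y (j - (n + 1)))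

/-- The inclusion map `ι_n` at the level of functions: `(ι_n ξ)(x₀,…,xₙ,𝐱) = ξ(x₀,…,xₙ)`. -/
def iotaFun (n : ℕ) (ξ : (∀ j : Fin (n + 1), X j) → ℂ) : (∀ j : ℕ, X j) → ℂ :=
  fun x => ξ (fun j => x j)

/-- The projection map `π_n` at the level of functions:
`(π_n η)(x₀,…,xₙ) = ∫_{X_{≥ n+1}} η(x₀,…,xₙ,𝐱) dμ_{≥ n+1}(𝐱)`. -/
def piFun [∀ j, MeasurableSpace (X j)] (νtail : ∀ k, Measure (∀ j : ℕ, X (k + j)))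
    (n : ℕ) (η : (∀ j : ℕ, X j) → ℂ) : (∀ j : Fin (n + 1), X j) → ℂ :=
  fun x => ∫ y, η (splice n x y) ∂(νtail (n + 1))

/-- The idempotent `P_n = ι_n ∘ π_n` at the level of functions. -/
def PnFun [∀ j, MeasurableSpace (X j)] (νtail : ∀ k, Measure (∀ j : ℕ, X (k + j)))
    (n : ℕ) (η : (∀ j : ℕ, X j) → ℂ) : (∀ j : ℕ, X j) → ℂ :=
  iotaFun n (piFun νtail n η)

/-- `Q_0 = P_0` and `Q_n = P_n - P_{n-1}` for `n ≥ 1`, at the level of functions. -/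
def QnFun [∀ j, MeasurableSpace (X j)] (νtail : ∀ k, Measure (∀ j : ℕ, X (k + j))) :
    ℕ → ((∀ j : ℕ, X j) → ℂ) → ((∀ j : ℕ, X j) → ℂ)
  | 0 => PnFun νtail 0
  | n + 1 => fun η => PnFun νtail (n + 1) η - PnFun νtail n η

/-- The elementary tensor `ξ ⊗ η` of a function on `X_{≤ n}` and a function on `X_{≥ n+1}`,
as a function on `X_{≥ 0}`. -/
def tensFun (n : ℕ) (ξ : (∀ j : Fin (n + 1), X j) → ℂ)
    (η : (∀ j : ℕ, X (n + 1 + j)) → ℂ) : (∀ j : ℕ, X j) → ℂ :=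
  fun x => ξ (fun j => x j) * η (fun j => x (n + 1 + j))

/-- Splicing a point of `X_{(n,m]}` (the first `m - n` coordinates of `X_{≥ n+1}`) with a
point of `X_{≥ m+1}` gives a point of `X_{≥ n+1}`. -/
def spliceMid {n m : ℕ} (hnm : n ≤ m) (y : ∀ j : ℕ, X (n + 1 + j))
    (w : ∀ j : ℕ, X (m + 1 + j)) : ∀ j : ℕ, X (n + 1 + j) := fun j =>
  if h : j < m - n then y j
  else cast (congrArg X (by omega : m + 1 + (j - (m - n)) = n + 1 + j)) (w (j - (m - n)))

/-- The operator `P_{m,n}` on functions on `X_{≥ n+1}`: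
`(P_{m,n} ζ)(x_{n+1},…,x_m,𝐳) = ∫_{X_{≥ m+1}} ζ(x_{n+1},…,x_m,𝐰) dμ_{≥ m+1}(𝐰)`. -/
def PtailFun [∀ j, MeasurableSpace (X j)] (νtail : ∀ k, Measure (∀ j : ℕ, X (k + j)))
    {n m : ℕ} (hnm : n ≤ m) (ζ : (∀ j : ℕ, X (n + 1 + j)) → ℂ) :
    (∀ j : ℕ, X (n + 1 + j)) → ℂ :=
  fun y => ∫ w, ζ (spliceMid hnm y w) ∂(νtail (m + 1))

section Stmt16Helpers

/-! ### Cast helpers -/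

theorem cast_eval' {Y : ℕ → Type*} (y : ∀ j, Y j) {i i' : ℕ} (h : i = i') :
    cast (congrArg Y h) (y i) = y i' := by subst h; rfl

theorem measurable_cast_nat {Y : ℕ → Type*} [∀ i, MeasurableSpace (Y i)] {i i' : ℕ} (h : i = i') :
    Measurable (cast (congrArg Y h) : Y i → Y i') := by subst h; exact measurable_id

theorem measure_cast_preimage {Y : ℕ → Type*} [∀ i, MeasurableSpace (Y i)]
    (μ : ∀ i, MeasureTheory.Measure (Y i)) {i i' : ℕ} (h : i = i') (s : Set (Y i')) :
    μ i ((cast (congrArg Y h) : Y i → Y i') ⁻¹' s) = μ i' s := by subst h; rfl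

theorem cast_tail' {X : ℕ → Type*} {c : ℕ} (w : ∀ j, X (c + j)) {a b t : ℕ}
    (h1 : c + a = t) (h2 : c + b = t) :
    cast (congrArg X h1) (w a) = cast (congrArg X h2) (w b) := by
  obtain rfl : a = b := by omega
  rfl

theorem cast_mem_tail {X : ℕ → Type*} {n : ℕ} (t : ∀ i, Set (X (n + 1 + i))) {i a b : ℕ}
    (ha : i = n + 1 + a) (hb : i = n + 1 + b) (z : X i) :
    cast (congrArg X ha) z ∈ t a ↔ cast (congrArg X hb) z ∈ t b := by
  obtain rfl : a = b := by omega
  rfl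

/-! ### splice / spliceMid coordinate lemmas -/

variable {X : ℕ → Type*}

theorem splice_coord_lt (n : ℕ) (x : ∀ j : Fin (n + 1), X j) (y : ∀ j, X (n + 1 + j)) {j : ℕ}
    (h : j < n + 1) : splice n x y j = x ⟨j, h⟩ := dif_pos h

theorem splice_coord_add (n : ℕ) (x : ∀ j : Fin (n + 1), X j) (y : ∀ j, X (n + 1 + j)) (j : ℕ) :
    splice n x y (n + 1 + j) = y j := by
  have h : ¬n + 1 + j < n + 1 := by omega
  simp only [splice, dif_neg h]
  exact cast_tail' y (by omega) rfl

theorem splice_restr (n : ℕ) (x : ∀ j : Fin (n + 1), X j) (y : ∀ j, X (n + 1 + j)) :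
    (fun i : Fin (n + 1) => splice n x y i) = x := by
  funext i
  rw [splice_coord_lt n x y i.isLt]

theorem splice_tail (n : ℕ) (x : ∀ j : Fin (n + 1), X j) (y : ∀ j, X (n + 1 + j)) :
    (fun j => splice n x y (n + 1 + j)) = y := by
  funext j; exact splice_coord_add n x y j

theorem measurable_splice [∀ j, MeasurableSpace (X j)] (n : ℕ) :
    Measurable (fun q : (∀ j : Fin (n + 1), X j) × (∀ j, X (n + 1 + j)) => splice n q.1 q.2) := by
  apply measurable_pi_lambda
  intro j
  by_cases h : j < n + 1
  · simp only [splice, dif_pos h]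
    exact (measurable_pi_apply _).comp measurable_fst
  · simp only [splice, dif_neg h]
    exact (measurable_cast_nat (show n + 1 + (j - (n + 1)) = j by omega)).comp
      ((measurable_pi_apply _).comp measurable_snd)

theorem spliceMid_coord_lt {n m : ℕ} (hnm : n ≤ m) (y : ∀ j, X (n + 1 + j))
    (w : ∀ j, X (m + 1 + j)) {j : ℕ} (h : j < m - n) : spliceMid hnm y w j = y j := dif_pos h

theorem measurable_spliceMid [∀ j, MeasurableSpace (X j)] {n m : ℕ} (hnm : n ≤ m) :
    Measurable (fun q : (∀ j, X (n + 1 + j)) × (∀ j, X (m + 1 + j)) => spliceMid hnm q.1 q.2) := by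
  apply measurable_pi_lambda
  intro j
  by_cases h : j < m - n
  · simp only [spliceMid, dif_pos h]
    exact (measurable_pi_apply _).comp measurable_fst
  · simp only [spliceMid, dif_neg h]
    exact (measurable_cast_nat (show m + 1 + (j - (m - n)) = n + 1 + j by omega)).comp
      ((measurable_pi_apply _).comp measurable_snd)

/-! ### Cylinder sets and uniqueness of product measures -/

open MeasureTheory

def cylSets (Y : ℕ → Type*) [∀ i, MeasurableSpace (Y i)] : Set (Set (∀ i, Y i)) :=
  {s | ∃ (F : Finset ℕ) (t : ∀ i, Set (Y i)), (∀ i, MeasurableSet (t i)) ∧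
    s = {x | ∀ i ∈ F, x i ∈ t i}}

theorem measurableSet_cylinder {Y : ℕ → Type*} [∀ i, MeasurableSpace (Y i)]
    {F : Finset ℕ} {t : ∀ i, Set (Y i)} (ht : ∀ i, MeasurableSet (t i)) :
    MeasurableSet {x : ∀ i, Y i | ∀ i ∈ F, x i ∈ t i} := by
  have : {x : ∀ i, Y i | ∀ i ∈ F, x i ∈ t i} = ⋂ i ∈ F, (fun x => x i) ⁻¹' t i := by
    ext x; simp
  rw [this]
  exact MeasurableSet.biInter F.countable_toSet fun i _ => measurable_pi_apply i (ht i)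

theorem isPiSystem_cylSets {Y : ℕ → Type*} [∀ i, MeasurableSpace (Y i)] :
    IsPiSystem (cylSets Y) := by
  rintro s ⟨F, t, ht, rfl⟩ s' ⟨F', t', ht', rfl⟩ -
  refine ⟨F ∪ F',
    fun i => (if i ∈ F then t i else Set.univ) ∩ (if i ∈ F' then t' i else Set.univ),
    fun i => MeasurableSet.inter (by split_ifs; exacts [ht i, MeasurableSet.univ])
      (by split_ifs; exacts [ht' i, MeasurableSet.univ]), ?_⟩
  ext x
  simp only [Set.mem_inter_iff, Set.mem_setOf_eq, Finset.mem_union]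
  constructor
  · rintro ⟨h1, h2⟩ i _
    constructor
    · split_ifs with h
      exacts [h1 i h, Set.mem_univ _]
    · split_ifs with h
      exacts [h2 i h, Set.mem_univ _]
  · intro h
    constructor
    · intro i hi
      have := (h i (Or.inl hi)).1
      rwa [if_pos hi] at this
    · intro i hi
      have := (h i (Or.inr hi)).2
      rwa [if_pos hi] at this

theorem generateFrom_cylSets {Y : ℕ → Type*} [∀ i, MeasurableSpace (Y i)] :
    MeasurableSpace.generateFrom (cylSets Y) = MeasurableSpace.pi := by
  refine le_antisymm ?_ ?_
  · rw [MeasurableSpace.generateFrom_le_iff]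
    rintro s ⟨F, t, ht, rfl⟩
    exact measurableSet_cylinder ht
  · rw [MeasurableSpace.pi]
    refine iSup_le fun i => ?_
    have : Measurable[MeasurableSpace.generateFrom (cylSets Y)] (fun x : ∀ i, Y i => x i) := by
      intro s hs
      apply MeasurableSpace.measurableSet_generateFrom
      refine ⟨{i}, Function.update (fun k => (Set.univ : Set (Y k))) i s, ?_, ?_⟩
      · intro k
        rcases eq_or_ne k i with rfl | hk
        · rw [Function.update_self]; exact hs
        · rw [Function.update_of_ne hk]; exact MeasurableSet.univ
      · ext x
        simp only [Set.mem_preimage, Set.mem_setOf_eq, Finset.mem_singleton]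
        constructor
        · rintro hx k rfl
          rwa [Function.update_self]
        · intro h
          have := h i rfl
          rwa [Function.update_self] at this
    exact measurable_iff_comap_le.mp this

theorem isProductMeasure_unique {Y : ℕ → Type*} [∀ i, MeasurableSpace (Y i)]
    (m : ∀ i, Measure (Y i)) (ν₁ ν₂ : Measure (∀ i, Y i))
    [IsProbabilityMeasure ν₁] [IsProbabilityMeasure ν₂]
    (h1 : IsProductMeasure m ν₁) (h2 : IsProductMeasure m ν₂) : ν₁ = ν₂ := by
  refine MeasureTheory.ext_of_generate_finite (cylSets Y) generateFrom_cylSets.symm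
    isPiSystem_cylSets ?_ (by simp)
  rintro s ⟨F, t, ht, rfl⟩
  rw [h1 F t ht, h2 F t ht]

end Stmt16Helpers

section Stmt16Measures

open MeasureTheory

variable {X : ℕ → Type*} [∀ j, MeasurableSpace (X j)]
  (μ : ∀ j, Measure (X j)) [∀ j, IsProbabilityMeasure (μ j)]
  (νall : Measure (∀ j, X j)) [IsProbabilityMeasure νall]
  (νtail : ∀ k, Measure (∀ j : ℕ, X (k + j))) [∀ k, IsProbabilityMeasure (νtail k)]

theorem muLe_prob (m : ℕ) : IsProbabilityMeasure (muLe μ m) := by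
  unfold muLe; infer_instance

theorem isProductMeasure_map_splice (m : ℕ)
    (hνt : IsProductMeasure (fun j => μ (m + 1 + j)) (νtail (m + 1))) :
    IsProductMeasure μ (Measure.map
      (fun q : (∀ j : Fin (m + 1), X j) × (∀ j, X (m + 1 + j)) => splice m q.1 q.2)
      ((muLe μ m).prod (νtail (m + 1)))) := by
  haveI := muLe_prob μ m
  intro F t ht
  rw [Measure.map_apply (measurable_splice m) (measurableSet_cylinder ht)]
  have hpre : (fun q : (∀ j : Fin (m + 1), X j) × (∀ j, X (m + 1 + j)) => splice m q.1 q.2) ⁻¹'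
      {x | ∀ i ∈ F, x i ∈ t i} =
      {x : ∀ j : Fin (m + 1), X j | ∀ i : Fin (m + 1), (i : ℕ) ∈ F → x i ∈ t i} ×ˢ
      {y : ∀ j, X (m + 1 + j) |
        ∀ j ∈ (F.filter fun i => ¬i < m + 1).image (fun i => i - (m + 1)),
          y j ∈ t (m + 1 + j)} := by
    ext ⟨x, y⟩
    simp only [Set.mem_preimage, Set.mem_setOf_eq, Set.mem_prod, Finset.mem_image,
      Finset.mem_filter]
    constructor
    · intro h
      refine ⟨fun i hi => ?_, fun j hj => ?_⟩
      · have := h i hi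
        rw [splice_coord_lt m x y i.isLt] at this
        simpa using this
      · obtain ⟨i, ⟨hiF, him⟩, rfl⟩ := hj
        have e : m + 1 + (i - (m + 1)) = i := by omega
        have := h i hiF
        rw [← e, splice_coord_add] at this
        exact this
    · rintro ⟨hx, hy⟩ i hi
      by_cases him : i < m + 1
      · rw [splice_coord_lt m x y him]
        exact hx ⟨i, him⟩ hi
      · have e : m + 1 + (i - (m + 1)) = i := by omega
        rw [← e, splice_coord_add]
        exact hy (i - (m + 1)) ⟨i, ⟨hi, him⟩, rfl⟩
  rw [hpre, Measure.prod_prod]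
  have hA : muLe μ m {x : ∀ j : Fin (m + 1), X j | ∀ i : Fin (m + 1), (i : ℕ) ∈ F → x i ∈ t i}
      = ∏ i ∈ (Finset.range (m + 1)).filter (· ∈ F), μ i (t i) := by
    have hset : {x : ∀ j : Fin (m + 1), X j | ∀ i : Fin (m + 1), (i : ℕ) ∈ F → x i ∈ t i}
        = Set.pi Set.univ (fun i : Fin (m + 1) => if (i : ℕ) ∈ F then t i else Set.univ) := by
      ext x
      simp only [Set.mem_setOf_eq, Set.mem_pi, Set.mem_univ, forall_true_left]
      constructor
      · intro h i
        split_ifs with hi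
        exacts [h i hi, Set.mem_univ _]
      · intro h i hi
        have := h i
        rwa [if_pos hi] at this
    rw [hset]
    unfold muLe
    rw [Measure.pi_pi]
    rw [Finset.prod_filter]
    rw [← Fin.prod_univ_eq_prod_range (fun i => if i ∈ F then μ i (t i) else 1) (m + 1)]
    apply Finset.prod_congr rfl
    intro i _
    split_ifs with hi
    · rfl
    · exact measure_univ
  have hB : νtail (m + 1) {y : ∀ j, X (m + 1 + j) |
      ∀ j ∈ (F.filter fun i => ¬i < m + 1).image (fun i => i - (m + 1)), y j ∈ t (m + 1 + j)}
      = ∏ j ∈ (F.filter fun i => ¬i < m + 1).image (fun i => i - (m + 1)),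
          μ (m + 1 + j) (t (m + 1 + j)) :=
    hνt _ (fun j => t (m + 1 + j)) (fun j => ht _)
  rw [hA, hB]
  rw [← Finset.prod_filter_mul_prod_filter_not F (fun i => i < m + 1)]
  congr 1
  · apply Finset.prod_congr
    · ext i
      simp only [Finset.mem_filter, Finset.mem_range, and_comm]
    · intros; rfl
  · rw [Finset.prod_image]
    · apply Finset.prod_congr rfl
      intro i hi
      simp only [Finset.mem_filter] at hi
      have e : m + 1 + (i - (m + 1)) = i := by omega
      rw [e]
    · intro i hi j hj hij
      simp only [Finset.coe_filter, Finset.mem_coe, Finset.mem_filter, Set.mem_setOf_eq] at hi hj hij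
      omega

theorem map_splice_eq (hνall : IsProductMeasure μ νall)
    (hνtail : ∀ k, IsProductMeasure (fun j => μ (k + j)) (νtail k)) (m : ℕ) :
    Measure.map (fun q : (∀ j : Fin (m + 1), X j) × (∀ j, X (m + 1 + j)) => splice m q.1 q.2)
      ((muLe μ m).prod (νtail (m + 1))) = νall := by
  haveI := muLe_prob μ m
  haveI : IsProbabilityMeasure (Measure.map
      (fun q : (∀ j : Fin (m + 1), X j) × (∀ j, X (m + 1 + j)) => splice m q.1 q.2)
      ((muLe μ m).prod (νtail (m + 1)))) :=
    Measure.isProbabilityMeasure_map (measurable_splice m).aemeasurable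
  exact isProductMeasure_unique μ _ νall (isProductMeasure_map_splice μ νtail m (hνtail (m + 1)))
    hνall

theorem isProductMeasure_map_spliceMid {n m : ℕ} (hnm : n ≤ m)
    (hν1 : IsProductMeasure (fun j => μ (n + 1 + j)) (νtail (n + 1)))
    (hν2 : IsProductMeasure (fun j => μ (m + 1 + j)) (νtail (m + 1))) :
    IsProductMeasure (fun j => μ (n + 1 + j))
      (Measure.map (fun q : (∀ j, X (n + 1 + j)) × (∀ j, X (m + 1 + j)) => spliceMid hnm q.1 q.2)
        ((νtail (n + 1)).prod (νtail (m + 1)))) := by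
  intro F t ht
  rw [Measure.map_apply (measurable_spliceMid hnm) (measurableSet_cylinder ht)]
  have hpre : (fun q : (∀ j, X (n + 1 + j)) × (∀ j, X (m + 1 + j)) => spliceMid hnm q.1 q.2) ⁻¹'
      {x | ∀ i ∈ F, x i ∈ t i} =
      {y : ∀ j, X (n + 1 + j) | ∀ j ∈ F.filter (fun j => j < m - n), y j ∈ t j} ×ˢ
      {w : ∀ j, X (m + 1 + j) |
        ∀ k ∈ (F.filter fun j => ¬j < m - n).image (fun j => j - (m - n)),
          w k ∈ (cast (congrArg X (show m + 1 + k = n + 1 + (k + (m - n)) by omega)) ⁻¹'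
            t (k + (m - n)))} := by
    ext ⟨y, w⟩
    simp only [Set.mem_preimage, Set.mem_setOf_eq, Set.mem_prod, Finset.mem_image,
      Finset.mem_filter]
    constructor
    · intro h
      refine ⟨fun j hj => ?_, fun k hk => ?_⟩
      · have := h j hj.1
        rwa [spliceMid_coord_lt hnm y w hj.2] at this
      · obtain ⟨j, ⟨hjF, hjm⟩, rfl⟩ := hk
        have := h j hjF
        simp only [spliceMid, dif_neg hjm] at this
        exact (cast_mem_tail t (by omega) (by omega) _).mp this
    · rintro ⟨hy, hw⟩ j hj
      by_cases hjm : j < m - n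
      · rw [spliceMid_coord_lt hnm y w hjm]
        exact hy j ⟨hj, hjm⟩
      · simp only [spliceMid, dif_neg hjm]
        have := hw (j - (m - n)) ⟨j, ⟨hj, hjm⟩, rfl⟩
        exact (cast_mem_tail t (by omega) (by omega) _).mpr this
  rw [hpre, Measure.prod_prod]
  have hA := hν1 (F.filter (fun j => j < m - n)) t ht
  have hB := hν2 ((F.filter fun j => ¬j < m - n).image (fun j => j - (m - n)))
    (fun k => (cast (congrArg X (show m + 1 + k = n + 1 + (k + (m - n)) by omega)) ⁻¹'
      t (k + (m - n))))
    (fun k => measurable_cast_nat (show m + 1 + k = n + 1 + (k + (m - n)) by omega) (ht _))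
  rw [hA, hB]
  have hBval : ∀ k, μ (m + 1 + k) (cast
        (congrArg X (show m + 1 + k = n + 1 + (k + (m - n)) by omega)) ⁻¹' t (k + (m - n)))
      = μ (n + 1 + (k + (m - n))) (t (k + (m - n))) := fun k =>
    measure_cast_preimage μ (show m + 1 + k = n + 1 + (k + (m - n)) by omega) _
  rw [← Finset.prod_filter_mul_prod_filter_not F (fun j => j < m - n)]
  congr 1
  rw [Finset.prod_image]
  · apply Finset.prod_congr rfl
    intro j hj
    simp only [Finset.mem_filter] at hj
    rw [hBval]
    have e : j - (m - n) + (m - n) = j := by omega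
    rw [e]
  · intro i hi j hj hij
    simp only [Finset.coe_filter, Finset.mem_coe, Finset.mem_filter, Set.mem_setOf_eq] at hi hj hij
    omega

theorem map_spliceMid_eq (hνtail : ∀ k, IsProductMeasure (fun j => μ (k + j)) (νtail k))
    {n m : ℕ} (hnm : n ≤ m) :
    Measure.map (fun q : (∀ j, X (n + 1 + j)) × (∀ j, X (m + 1 + j)) => spliceMid hnm q.1 q.2)
      ((νtail (n + 1)).prod (νtail (m + 1))) = νtail (n + 1) := by
  haveI : IsProbabilityMeasure (Measure.map
      (fun q : (∀ j, X (n + 1 + j)) × (∀ j, X (m + 1 + j)) => spliceMid hnm q.1 q.2)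
      ((νtail (n + 1)).prod (νtail (m + 1)))) :=
    Measure.isProbabilityMeasure_map (measurable_spliceMid hnm).aemeasurable
  exact isProductMeasure_unique _ _ _
    (isProductMeasure_map_spliceMid μ νtail hnm (hνtail (n + 1)) (hνtail (m + 1))) (hνtail (n + 1))

theorem measurable_restr (m : ℕ) : Measurable (fun (z : ∀ j, X j) (i : Fin (m + 1)) => z i) :=
  measurable_pi_lambda _ fun i => measurable_pi_apply _

theorem measurable_tailproj (k : ℕ) : Measurable (fun (z : ∀ j, X j) (t : ℕ) => z (k + t)) :=
  measurable_pi_lambda _ fun t => measurable_pi_apply _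

theorem map_restr_eq (hνall : IsProductMeasure μ νall)
    (hνtail : ∀ k, IsProductMeasure (fun j => μ (k + j)) (νtail k)) (m : ℕ) :
    Measure.map (fun (z : ∀ j, X j) (i : Fin (m + 1)) => z i) νall = muLe μ m := by
  haveI := muLe_prob μ m
  conv_lhs => rw [← map_splice_eq μ νall νtail hνall hνtail m]
  rw [Measure.map_map (measurable_restr m) (measurable_splice m)]
  have hcomp : ((fun (z : ∀ j, X j) (i : Fin (m + 1)) => z i) ∘
      fun q : (∀ j : Fin (m + 1), X j) × (∀ j, X (m + 1 + j)) => splice m q.1 q.2)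
      = Prod.fst := by
    funext q
    exact splice_restr m q.1 q.2
  rw [hcomp, Measure.map_fst_prod, measure_univ, one_smul]

theorem map_tailproj_eq (hνall : IsProductMeasure μ νall)
    (hνtail : ∀ k, IsProductMeasure (fun j => μ (k + j)) (νtail k)) (m : ℕ) :
    Measure.map (fun (z : ∀ j, X j) (t : ℕ) => z (m + 1 + t)) νall = νtail (m + 1) := by
  haveI := muLe_prob μ m
  conv_lhs => rw [← map_splice_eq μ νall νtail hνall hνtail m]
  rw [Measure.map_map (measurable_tailproj (m + 1)) (measurable_splice m)]
  have hcomp : ((fun (z : ∀ j, X j) (t : ℕ) => z (m + 1 + t)) ∘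
      fun q : (∀ j : Fin (m + 1), X j) × (∀ j, X (m + 1 + j)) => splice m q.1 q.2)
      = Prod.snd := by
    funext q
    exact splice_tail m q.1 q.2
  rw [hcomp, Measure.map_snd_prod, measure_univ, one_smul]

theorem pnFun_congr_ae (hνall : IsProductMeasure μ νall)
    (hνtail : ∀ k, IsProductMeasure (fun j => μ (k + j)) (νtail k)) (m : ℕ) {g₁ g₂ : (∀ j, X j) → ℂ} (h : g₁ =ᵐ[νall] g₂) :
    PnFun νtail m g₁ =ᵐ[νall] PnFun νtail m g₂ := by
  haveI := muLe_prob μ m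
  have hmap := map_splice_eq μ νall νtail hνall hνtail m
  have h' : (fun q : (∀ j : Fin (m + 1), X j) × (∀ j, X (m + 1 + j)) => g₁ (splice m q.1 q.2))
      =ᵐ[(muLe μ m).prod (νtail (m + 1))] fun q => g₂ (splice m q.1 q.2) := by
    apply MeasureTheory.ae_eq_comp (measurable_splice m).aemeasurable
    rw [hmap]
    exact h
  have h'' := Measure.ae_ae_of_ae_prod h'
  have hq : ∀ᵐ x ∂muLe μ m, piFun νtail m g₁ x = piFun νtail m g₂ x :=
    h''.mono fun x hx => integral_congr_ae hx
  obtain ⟨N, hsub, hNm, hN0⟩ := exists_measurable_superset_of_null (ae_iff.mp hq)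
  have hkey : νall ((fun z (i : Fin (m + 1)) => z i) ⁻¹' N) = 0 := by
    rw [← hmap, Measure.map_apply (measurable_splice m) (measurable_restr m hNm)]
    have hps : ((fun q : (∀ j : Fin (m + 1), X j) × (∀ j, X (m + 1 + j)) => splice m q.1 q.2) ⁻¹'
        ((fun z (i : Fin (m + 1)) => z i) ⁻¹' N)) = N ×ˢ Set.univ := by
      ext ⟨x, y⟩
      simp only [Set.mem_preimage, Set.mem_prod, Set.mem_univ, and_true]
      rw [splice_restr]
    rw [hps, Measure.prod_prod, measure_univ, mul_one, hN0]
  rw [Filter.EventuallyEq, ae_iff]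
  refine measure_mono_null ?_ hkey
  intro z hz
  exact hsub hz

theorem pnFun_pnFun {j k : ℕ} (hkj : k ≤ j) (g : (∀ i, X i) → ℂ) :
    PnFun νtail j (PnFun νtail k g) = PnFun νtail k g := by
  funext z
  show ∫ y, PnFun νtail k g (splice j (fun i : Fin (j + 1) => z i) y) ∂νtail (j + 1)
      = PnFun νtail k g z
  have hconst : ∀ y, PnFun νtail k g (splice j (fun i : Fin (j + 1) => z i) y)
      = PnFun νtail k g z := by
    intro y
    show piFun νtail k g (fun i : Fin (k + 1) => splice j (fun i : Fin (j + 1) => z i) y i)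
        = piFun νtail k g (fun i : Fin (k + 1) => z i)
    congr 1
    funext i
    rw [splice_coord_lt j _ _ (show (i : ℕ) < j + 1 by omega)]
  simp_rw [hconst]
  simp

theorem pnFun_tensFun {n j : ℕ} (hnj : n ≤ j) (ζ : (∀ i : Fin (n + 1), X i) → ℂ)
    (η : (∀ t, X (n + 1 + t)) → ℂ) :
    PnFun νtail j (tensFun n ζ η) = tensFun n ζ (PtailFun νtail hnj η) := by
  funext z
  show ∫ w, tensFun n ζ η (splice j (fun i : Fin (j + 1) => z i) w) ∂νtail (j + 1)
      = ζ (fun i : Fin (n + 1) => z i)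
        * ∫ w, η (spliceMid hnj (fun t => z (n + 1 + t)) w) ∂νtail (j + 1)
  have hint : ∀ w, tensFun n ζ η (splice j (fun i : Fin (j + 1) => z i) w)
      = ζ (fun i : Fin (n + 1) => z i) * η (spliceMid hnj (fun t => z (n + 1 + t)) w) := by
    intro w
    unfold tensFun
    congr 1
    · congr 1
      funext i
      rw [splice_coord_lt j _ _ (show (i : ℕ) < j + 1 by omega)]
    · congr 1
      funext t
      by_cases ht : t < j - n
      · rw [spliceMid_coord_lt hnj _ _ ht,
          splice_coord_lt j _ _ (show n + 1 + t < j + 1 by omega)]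
      · simp only [splice, spliceMid, dif_neg ht, dif_neg (show ¬n + 1 + t < j + 1 by omega)]
        exact cast_tail' w (by omega) (by omega)
  simp_rw [hint]
  rw [MeasureTheory.integral_const_mul]

end Stmt16Measures

section Stmt16Lp

open MeasureTheory

variable {X : ℕ → Type*} [∀ j, MeasurableSpace (X j)]
  (μ : ∀ j, Measure (X j)) [∀ j, IsProbabilityMeasure (μ j)]
  (νall : Measure (∀ j, X j)) [IsProbabilityMeasure νall]
  (νtail : ∀ k, Measure (∀ j : ℕ, X (k + j))) [∀ k, IsProbabilityMeasure (νtail k)]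
  {p : ℝ≥0∞} [Fact (1 ≤ p)]

theorem aesm_tensFun (hνall : IsProductMeasure μ νall)
    (hνtail : ∀ k, IsProductMeasure (fun j => μ (k + j)) (νtail k)) {n : ℕ}
    {ζ : (∀ i : Fin (n + 1), X i) → ℂ} {η : (∀ t, X (n + 1 + t)) → ℂ}
    (hζ : AEStronglyMeasurable ζ (muLe μ n)) (hη : AEStronglyMeasurable η (νtail (n + 1))) :
    AEStronglyMeasurable (tensFun n ζ η) νall := by
  have h1 : AEStronglyMeasurable (fun z : ∀ j, X j => ζ (fun i : Fin (n + 1) => z i)) νall := by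
    rw [← map_restr_eq μ νall νtail hνall hνtail n] at hζ
    exact hζ.comp_measurable (measurable_restr n)
  have h2 : AEStronglyMeasurable (fun z : ∀ j, X j => η (fun t => z (n + 1 + t))) νall := by
    rw [← map_tailproj_eq μ νall νtail hνall hνtail n] at hη
    exact hη.comp_measurable (measurable_tailproj (n + 1))
  exact h1.mul h2

theorem memℒp_tensFun (hνall : IsProductMeasure μ νall)
    (hνtail : ∀ k, IsProductMeasure (fun j => μ (k + j)) (νtail k)) (hp' : p ≠ ∞) {n : ℕ}
    {ζ : (∀ i : Fin (n + 1), X i) → ℂ} {η : (∀ t, X (n + 1 + t)) → ℂ}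
    (hζ : MemLp ζ p (muLe μ n)) (hη : MemLp η p (νtail (n + 1))) :
    MemLp (tensFun n ζ η) p νall := by
  haveI := muLe_prob μ n
  have hp0 : p ≠ 0 := (lt_of_lt_of_le zero_lt_one Fact.out).ne'
  have hsm := aesm_tensFun μ νall νtail hνall hνtail hζ.1 hη.1
  refine ⟨hsm, ?_⟩
  have hmap := map_splice_eq μ νall νtail hνall hνtail n
  rw [← hmap, eLpNorm_map_measure (by rw [hmap]; exact hsm) (measurable_splice n).aemeasurable]
  have hcomp : (tensFun n ζ η ∘
      fun q : (∀ i : Fin (n + 1), X i) × (∀ t, X (n + 1 + t)) => splice n q.1 q.2)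
      = fun q : (∀ i : Fin (n + 1), X i) × (∀ t, X (n + 1 + t)) => ζ q.1 * η q.2 := by
    funext q
    show tensFun n ζ η (splice n q.1 q.2) = _
    unfold tensFun
    rw [splice_restr, splice_tail]
  rw [hcomp, eLpNorm_eq_lintegral_rpow_enorm_toReal hp0 hp']
  have hlint : ∫⁻ q, ‖ζ q.1 * η q.2‖ₑ ^ p.toReal ∂(muLe μ n).prod (νtail (n + 1))
      = (∫⁻ x, ‖ζ x‖ₑ ^ p.toReal ∂muLe μ n)
        * ∫⁻ y, ‖η y‖ₑ ^ p.toReal ∂νtail (n + 1) := by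
    have hptw : ∀ q : (∀ i : Fin (n + 1), X i) × (∀ t, X (n + 1 + t)),
        ‖ζ q.1 * η q.2‖ₑ ^ p.toReal
          = ‖ζ q.1‖ₑ ^ p.toReal * ‖η q.2‖ₑ ^ p.toReal := by
      intro q
      rw [enorm_mul, ENNReal.mul_rpow_of_nonneg _ _ ENNReal.toReal_nonneg]
    simp_rw [hptw]
    exact lintegral_prod_mul (hζ.1.enorm.pow_const _) (hη.1.enorm.pow_const _)
  rw [hlint]
  refine ENNReal.rpow_lt_top_of_nonneg (by positivity) ?_
  exact ENNReal.mul_ne_top (lintegral_rpow_enorm_lt_top_of_eLpNorm_lt_top hp0 hp' hζ.2).ne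
    (lintegral_rpow_enorm_lt_top_of_eLpNorm_lt_top hp0 hp' hη.2).ne

theorem aesm_ptailFun (hνtail : ∀ k, IsProductMeasure (fun j => μ (k + j)) (νtail k))
    {n m : ℕ} (hnm : n ≤ m) {η : (∀ t, X (n + 1 + t)) → ℂ}
    (hη : AEStronglyMeasurable η (νtail (n + 1))) :
    AEStronglyMeasurable (PtailFun νtail hnm η) (νtail (n + 1)) := by
  have hmap := map_spliceMid_eq μ νtail hνtail hnm
  have hG : AEStronglyMeasurable (fun q : (∀ j, X (n + 1 + j)) × (∀ j, X (m + 1 + j)) =>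
      η (spliceMid hnm q.1 q.2)) ((νtail (n + 1)).prod (νtail (m + 1))) := by
    rw [← hmap] at hη
    exact hη.comp_measurable (measurable_spliceMid hnm)
  exact hG.integral_prod_right'

theorem memℒp_ptailFun (hνtail : ∀ k, IsProductMeasure (fun j => μ (k + j)) (νtail k))
    (hp' : p ≠ ∞) {n m : ℕ} (hnm : n ≤ m) {η : (∀ t, X (n + 1 + t)) → ℂ}
    (hη : MemLp η p (νtail (n + 1))) : MemLp (PtailFun νtail hnm η) p (νtail (n + 1)) := by
  have hp1 : (1 : ℝ≥0∞) ≤ p := Fact.out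
  have hp0 : p ≠ 0 := (lt_of_lt_of_le zero_lt_one hp1).ne'
  have hpt : 0 < p.toReal := ENNReal.toReal_pos hp0 hp'
  have hmap := map_spliceMid_eq μ νtail hνtail hnm
  have hG : AEStronglyMeasurable (fun q : (∀ j, X (n + 1 + j)) × (∀ j, X (m + 1 + j)) =>
      η (spliceMid hnm q.1 q.2)) ((νtail (n + 1)).prod (νtail (m + 1))) := by
    have hη' := hη.1
    rw [← hmap] at hη'
    exact hη'.comp_measurable (measurable_spliceMid hnm)
  refine ⟨aesm_ptailFun μ νtail hνtail hnm hη.1, ?_⟩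
  have key : eLpNorm (PtailFun νtail hnm η) p (νtail (n + 1)) ≤ eLpNorm η p (νtail (n + 1)) := by
    rw [eLpNorm_eq_lintegral_rpow_enorm_toReal hp0 hp', eLpNorm_eq_lintegral_rpow_enorm_toReal hp0 hp']
    refine ENNReal.rpow_le_rpow ?_ (by positivity)
    have hslice : ∀ᵐ y ∂νtail (n + 1),
        ‖PtailFun νtail hnm η y‖ₑ ^ p.toReal
          ≤ ∫⁻ w, ‖η (spliceMid hnm y w)‖ₑ ^ p.toReal ∂νtail (m + 1) := by
      filter_upwards [hG.prodMk_left] with y hy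
      have h1 : ‖PtailFun νtail hnm η y‖ₑ
          ≤ eLpNorm (fun w => η (spliceMid hnm y w)) 1 (νtail (m + 1)) := by
        rw [eLpNorm_one_eq_lintegral_enorm]
        exact enorm_integral_le_lintegral_enorm _
      have h2 : eLpNorm (fun w => η (spliceMid hnm y w)) 1 (νtail (m + 1))
          ≤ eLpNorm (fun w => η (spliceMid hnm y w)) p (νtail (m + 1)) :=
        eLpNorm_le_eLpNorm_of_exponent_le hp1 hy
      calc ‖PtailFun νtail hnm η y‖ₑ ^ p.toReal
          ≤ (eLpNorm (fun w => η (spliceMid hnm y w)) p (νtail (m + 1))) ^ p.toReal :=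
            ENNReal.rpow_le_rpow (h1.trans h2) hpt.le
        _ = ∫⁻ w, ‖η (spliceMid hnm y w)‖ₑ ^ p.toReal ∂νtail (m + 1) := by
            rw [eLpNorm_eq_lintegral_rpow_enorm_toReal hp0 hp', ← ENNReal.rpow_mul, one_div,
              inv_mul_cancel₀ hpt.ne', ENNReal.rpow_one]
    calc ∫⁻ y, ‖PtailFun νtail hnm η y‖ₑ ^ p.toReal ∂νtail (n + 1)
        ≤ ∫⁻ y, ∫⁻ w, ‖η (spliceMid hnm y w)‖ₑ ^ p.toReal ∂νtail (m + 1)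
            ∂νtail (n + 1) := lintegral_mono_ae hslice
      _ = ∫⁻ q, ‖η (spliceMid hnm q.1 q.2)‖ₑ ^ p.toReal
            ∂(νtail (n + 1)).prod (νtail (m + 1)) :=
          (lintegral_prod _ (hG.enorm.pow_const _)).symm
      _ = ∫⁻ y, ‖η y‖ₑ ^ p.toReal ∂νtail (n + 1) := by
          have hfm : AEMeasurable (fun y => ‖η y‖ₑ ^ p.toReal)
              (Measure.map (fun q : (∀ j, X (n + 1 + j)) × (∀ j, X (m + 1 + j)) =>
                spliceMid hnm q.1 q.2) ((νtail (n + 1)).prod (νtail (m + 1)))) := by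
            rw [hmap]
            exact hη.1.enorm.pow_const _
          conv_rhs => rw [← hmap]
          rw [lintegral_map' hfm (measurable_spliceMid hnm).aemeasurable]
  exact lt_of_le_of_lt key hη.2

theorem generateFrom_tensRects (n : ℕ) :
    MeasurableSpace.generateFrom
      {u : Set (∀ j, X j) | ∃ (A : Set (∀ i : Fin (n + 1), X i)) (B : Set (∀ t, X (n + 1 + t))),
        MeasurableSet A ∧ MeasurableSet B ∧
        u = {z | (fun i : Fin (n + 1) => z i) ∈ A ∧ (fun t => z (n + 1 + t)) ∈ B}}
      = MeasurableSpace.pi := by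
  refine le_antisymm ?_ ?_
  · rw [MeasurableSpace.generateFrom_le_iff]
    rintro u ⟨A, B, hA, hB, rfl⟩
    exact (measurable_restr n hA).inter (measurable_tailproj (n + 1) hB)
  · rw [MeasurableSpace.pi]
    refine iSup_le fun i => ?_
    refine measurable_iff_comap_le.mp ?_
    intro s hs
    apply MeasurableSpace.measurableSet_generateFrom
    by_cases hi : i < n + 1
    · refine ⟨(fun x : ∀ i' : Fin (n + 1), X i' => x ⟨i, hi⟩) ⁻¹' s, Set.univ,
        measurable_pi_apply _ hs, MeasurableSet.univ, ?_⟩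
      ext z
      simp only [Set.mem_preimage, Set.mem_setOf_eq, Set.mem_univ, and_true]
    · have e : n + 1 + (i - (n + 1)) = i := by omega
      refine ⟨Set.univ,
        (fun y : ∀ t, X (n + 1 + t) => cast (congrArg X e) (y (i - (n + 1)))) ⁻¹' s,
        MeasurableSet.univ,
        ((measurable_cast_nat e).comp
          (measurable_pi_apply (i - (n + 1)) :
            Measurable fun y : ∀ t, X (n + 1 + t) => y (i - (n + 1)))) hs, ?_⟩
      ext z
      simp only [Set.mem_preimage, Set.mem_setOf_eq, Set.mem_univ, true_and]
      rw [cast_eval' z e]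

theorem isPiSystem_tensRects (n : ℕ) :
    IsPiSystem {u : Set (∀ j, X j) |
      ∃ (A : Set (∀ i : Fin (n + 1), X i)) (B : Set (∀ t, X (n + 1 + t))),
        MeasurableSet A ∧ MeasurableSet B ∧
        u = {z | (fun i : Fin (n + 1) => z i) ∈ A ∧ (fun t => z (n + 1 + t)) ∈ B}} := by
  rintro u ⟨A, B, hA, hB, rfl⟩ u' ⟨A', B', hA', hB', rfl⟩ -
  refine ⟨A ∩ A', B ∩ B', hA.inter hA', hB.inter hB', ?_⟩
  ext z
  simp only [Set.mem_inter_iff, Set.mem_setOf_eq]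
  tauto

end Stmt16Lp

set_option maxHeartbeats 2000000 in
theorem stmt16 (p : ℝ≥0∞) [Fact (1 ≤ p)] (hp' : p ≠ ∞)
    {X : ℕ → Type*} [∀ j, MeasurableSpace (X j)]
    (μ : ∀ j, Measure (X j)) [∀ j, IsProbabilityMeasure (μ j)]
    (νall : Measure (∀ j, X j)) [IsProbabilityMeasure νall]
    (hνall : IsProductMeasure μ νall)
    (νtail : ∀ k, Measure (∀ j : ℕ, X (k + j))) [∀ k, IsProbabilityMeasure (νtail k)]
    (hνtail : ∀ k, IsProductMeasure (fun j => μ (k + j)) (νtail k))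
    (α : ℕ → ℝ) (hα0 : α 0 = 0)
    (n : ℕ)
    (a : Lp ℂ p νall →L[ℂ] Lp ℂ p νall)
    (c : Lp ℂ p (muLe μ n) →L[ℂ] Lp ℂ p (muLe μ n))
    (hac : ∀ (ξ : Lp ℂ p (muLe μ n)) (η : (∀ j : ℕ, X (n + 1 + j)) → ℂ),
      MemLp η p (νtail (n + 1)) →
      ∀ (h1 : MemLp (tensFun n (⇑ξ) η) p νall)
        (h2 : MemLp (tensFun n (⇑(c ξ)) η) p νall),
        a (MemLp.toLp _ h1) = MemLp.toLp _ h2)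
    (Phat : ℕ → (Lp ℂ p νall →L[ℂ] Lp ℂ p νall))
    (hPhat : ∀ (k : ℕ) (f : Lp ℂ p νall), ⇑(Phat k f) =ᵐ[νall] PnFun νtail k ⇑f)
    (Qhat : ℕ → (Lp ℂ p νall →L[ℂ] Lp ℂ p νall))
    (hQ0 : Qhat 0 = Phat 0) (hQ : ∀ k : ℕ, Qhat (k + 1) = Phat (k + 1) - Phat k) :
    (∀ m : ℕ, n ≤ m → ∀ f : Lp ℂ p νall, Phat m f = f → Phat m (a f) = a f) ∧
    (∀ (m : ℕ) (f : Lp ℂ p νall), Phat m f = f →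
      (∑ k ∈ Finset.Icc 1 (max m n), ((α k : ℂ)) • Qhat k (a f))
          - a (∑ k ∈ Finset.Icc 1 m, ((α k : ℂ)) • Qhat k f)
        = ∑ k ∈ Finset.Icc 1 n, ((α k : ℂ)) • (Qhat k (a f) - a (Qhat k f))) ∧
    (∃ C : ℝ, 0 ≤ C ∧ ∀ (m : ℕ) (f : Lp ℂ p νall), Phat m f = f →
      ‖(∑ k ∈ Finset.Icc 1 (max m n), ((α k : ℂ)) • Qhat k (a f))
          - a (∑ k ∈ Finset.Icc 1 m, ((α k : ℂ)) • Qhat k f)‖ ≤ C * ‖f‖) := by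
  classical
  have hp1 : (1 : ℝ≥0∞) ≤ p := Fact.out
  have hp0 : p ≠ 0 := (lt_of_lt_of_le zero_lt_one hp1).ne'
  haveI := muLe_prob μ n
  -- the set of elementary tensors
  set TS : Set (Lp ℂ p νall) :=
    {g | ∃ (ξ : Lp ℂ p (muLe μ n)) (η : (∀ t : ℕ, X (n + 1 + t)) → ℂ)
      (hη : MemLp η p (νtail (n + 1))) (h : MemLp (tensFun n (⇑ξ) η) p νall),
      g = MemLp.toLp _ h} with hTSdef
  -- Step 1: indicators of "tensor rectangles" lie in the closed span of TS.
  have hbase : ∀ (A : Set (∀ i : Fin (n + 1), X i)) (B : Set (∀ t : ℕ, X (n + 1 + t))),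
      MeasurableSet A → MeasurableSet B → ∀ (c₀ : ℂ)
      (hs : MeasurableSet {z : ∀ j, X j |
        (fun i : Fin (n + 1) => z i) ∈ A ∧ (fun t => z (n + 1 + t)) ∈ B})
      (hμs : νall {z : ∀ j, X j |
        (fun i : Fin (n + 1) => z i) ∈ A ∧ (fun t => z (n + 1 + t)) ∈ B} ≠ ∞),
      indicatorConstLp p hs hμs c₀ ∈ (Submodule.span ℂ TS).topologicalClosure := by
    intro A B hA hB c₀ hs hμs
    set ξ0 : Lp ℂ p (muLe μ n) :=
      (memLp_indicator_const p hA c₀ (Or.inr (measure_ne_top _ _))).toLp _ with hξ0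
    have hη0 : MemLp (B.indicator fun _ => (1 : ℂ)) p (νtail (n + 1)) :=
      memLp_indicator_const p hB 1 (Or.inr (measure_ne_top _ _))
    have hmem : MemLp (tensFun n (⇑ξ0) (B.indicator fun _ => (1 : ℂ))) p νall :=
      memℒp_tensFun μ νall νtail hνall hνtail hp' (Lp.memLp ξ0) hη0
    have helt : (MemLp.toLp _ hmem) ∈ TS := ⟨ξ0, _, hη0, hmem, rfl⟩
    have heq : indicatorConstLp p hs hμs c₀ = MemLp.toLp _ hmem := by
      apply Lp.ext
      have h1 : ⇑ξ0 =ᵐ[muLe μ n] A.indicator fun _ => c₀ := MemLp.coeFn_toLp _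
      have h2 : (⇑ξ0 ∘ fun z : ∀ j, X j => (fun i : Fin (n + 1) => z i))
          =ᵐ[νall] ((A.indicator fun _ => c₀) ∘ fun z : ∀ j, X j =>
            (fun i : Fin (n + 1) => z i)) := by
        apply MeasureTheory.ae_eq_comp (measurable_restr n).aemeasurable
        rw [map_restr_eq μ νall νtail hνall hνtail n]
        exact h1
      calc ⇑(indicatorConstLp p hs hμs c₀)
          =ᵐ[νall] Set.indicator {z : ∀ j, X j |
            (fun i : Fin (n + 1) => z i) ∈ A ∧ (fun t => z (n + 1 + t)) ∈ B}
            (fun _ => c₀) := indicatorConstLp_coeFn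
        _ = tensFun n (A.indicator fun _ => c₀) (B.indicator fun _ => (1 : ℂ)) := by
            funext z
            by_cases h1z : (fun i : Fin (n + 1) => z i) ∈ A <;>
              by_cases h2z : (fun t => z (n + 1 + t)) ∈ B <;>
              simp [tensFun, Set.indicator, h1z, h2z]
        _ =ᵐ[νall] tensFun n (⇑ξ0) (B.indicator fun _ => (1 : ℂ)) := by
            filter_upwards [h2] with z hz
            simp only [Function.comp_apply] at hz
            simp only [tensFun]
            rw [hz]
        _ =ᵐ[νall] ⇑(MemLp.toLp _ hmem) := (MemLp.coeFn_toLp hmem).symm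
    rw [heq]
    exact Submodule.le_topologicalClosure _ (Submodule.subset_span helt)
  -- Step 2: indicators of arbitrary measurable sets lie in the closed span (π-λ argument).
  have hind : ∀ ⦃t : Set (∀ j, X j)⦄, MeasurableSet t → ∀ (ht : MeasurableSet t) (c₀ : ℂ)
      (hμt : νall t ≠ ∞),
      indicatorConstLp p ht hμt c₀ ∈ (Submodule.span ℂ TS).topologicalClosure := by
    have hunivmem : ∀ c₀ : ℂ,
        indicatorConstLp p MeasurableSet.univ (measure_ne_top νall _) c₀
          ∈ (Submodule.span ℂ TS).topologicalClosure := by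
      intro c₀
      have hSuniv : {z : ∀ j, X j | (fun i : Fin (n + 1) => z i) ∈ (Set.univ :
          Set (∀ i : Fin (n + 1), X i)) ∧ (fun t => z (n + 1 + t)) ∈ (Set.univ :
          Set (∀ t : ℕ, X (n + 1 + t)))} = Set.univ := by
        ext z; simp
      have hSm : MeasurableSet {z : ∀ j, X j | (fun i : Fin (n + 1) => z i) ∈ (Set.univ :
          Set (∀ i : Fin (n + 1), X i)) ∧ (fun t => z (n + 1 + t)) ∈ (Set.univ :
          Set (∀ t : ℕ, X (n + 1 + t)))} := by
        rw [hSuniv]; exact MeasurableSet.univ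
      have h0 := hbase Set.univ Set.univ MeasurableSet.univ MeasurableSet.univ c₀ hSm
        (measure_ne_top _ _)
      have heq : indicatorConstLp p hSm (measure_ne_top νall _) c₀
          = indicatorConstLp p MeasurableSet.univ (measure_ne_top νall _) c₀ := by
        apply Lp.ext
        calc ⇑(indicatorConstLp p hSm (measure_ne_top νall _) c₀)
            =ᵐ[νall] Set.indicator _ (fun _ => c₀) := indicatorConstLp_coeFn
          _ = Set.indicator Set.univ (fun _ => c₀) := by rw [hSuniv]
          _ =ᵐ[νall] ⇑(indicatorConstLp p MeasurableSet.univ (measure_ne_top νall _) c₀) :=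
              indicatorConstLp_coeFn.symm
      rwa [heq] at h0
    refine MeasurableSpace.induction_on_inter (generateFrom_tensRects (X := X) n).symm
      (isPiSystem_tensRects n) ?_ ?_ ?_ ?_
    · intro ht c₀ hμt
      have hzero : indicatorConstLp p ht hμt c₀ = 0 := by
        apply Lp.ext
        calc ⇑(indicatorConstLp p ht hμt c₀)
            =ᵐ[νall] Set.indicator ∅ fun _ => c₀ := indicatorConstLp_coeFn
          _ = fun _ => (0 : ℂ) := by simp
          _ =ᵐ[νall] ⇑(0 : Lp ℂ p νall) := (Lp.coeFn_zero _ _ _).symm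
      rw [hzero]
      exact Submodule.zero_mem _
    · rintro u ⟨A, B, hA, hB, rfl⟩ ht c₀ hμt
      exact hbase A B hA hB c₀ ht hμt
    · intro t htm IH ht' c₀ hμt'
      have hsub : indicatorConstLp p ht' hμt' c₀
          = indicatorConstLp p MeasurableSet.univ (measure_ne_top νall _) c₀
            - indicatorConstLp p htm (measure_ne_top νall _) c₀ := by
        apply Lp.ext
        filter_upwards [indicatorConstLp_coeFn (p := p) (hs := ht') (hμs := hμt') (c := c₀),
          Lp.coeFn_sub (indicatorConstLp p MeasurableSet.univ (measure_ne_top νall _) c₀)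
            (indicatorConstLp p htm (measure_ne_top νall _) c₀),
          indicatorConstLp_coeFn (p := p) (hs := MeasurableSet.univ)
            (hμs := measure_ne_top νall _) (c := c₀),
          indicatorConstLp_coeFn (p := p) (hs := htm)
            (hμs := measure_ne_top νall _) (c := c₀)] with z h1 h2 h3 h4
        rw [h1, h2]
        simp only [Pi.sub_apply]
        rw [h3, h4]
        by_cases hz : z ∈ t <;> simp [Set.indicator, hz]
      rw [hsub]
      exact Submodule.sub_mem _ (hunivmem c₀) (IH htm c₀ (measure_ne_top _ _))
    · intro f hdisj hmeas IH ht c₀ hμt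
      set g : ℕ → Set (∀ j, X j) := fun k => ⋃ (i : ℕ) (_ : i < k), f i with hgdef
      have hgm : ∀ k, MeasurableSet (g k) :=
        fun k => MeasurableSet.biUnion (Set.to_countable _) fun i _ => hmeas i
      have hgmono : Monotone g := by
        intro k l hkl z hz
        simp only [hgdef, Set.mem_iUnion] at hz ⊢
        obtain ⟨i, hik, hzi⟩ := hz
        exact ⟨i, lt_of_lt_of_le hik hkl, hzi⟩
      have hpart : ∀ k, indicatorConstLp p (hgm k) (measure_ne_top νall _) c₀
          ∈ (Submodule.span ℂ TS).topologicalClosure := by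
        intro k
        induction k with
        | zero =>
          have h0 : g 0 = ∅ := by
            ext z; simp [hgdef]
          have hzero : indicatorConstLp p (hgm 0) (measure_ne_top νall _) c₀ = 0 := by
            apply Lp.ext
            calc ⇑(indicatorConstLp p (hgm 0) (measure_ne_top νall _) c₀)
                =ᵐ[νall] Set.indicator (g 0) fun _ => c₀ := indicatorConstLp_coeFn
              _ = fun _ => (0 : ℂ) := by rw [h0]; simp
              _ =ᵐ[νall] ⇑(0 : Lp ℂ p νall) := (Lp.coeFn_zero _ _ _).symm
          rw [hzero]
          exact Submodule.zero_mem _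
        | succ k ihk =>
          have hgu : g (k + 1) = g k ∪ f k := by
            ext z
            simp only [hgdef, Set.mem_iUnion, Set.mem_union]
            constructor
            · rintro ⟨i, hik, hzi⟩
              rcases Nat.lt_or_ge i k with h | h
              · exact Or.inl ⟨i, h, hzi⟩
              · obtain rfl : i = k := by omega
                exact Or.inr hzi
            · rintro (⟨i, hik, hzi⟩ | hz)
              · exact ⟨i, by omega, hzi⟩
              · exact ⟨k, by omega, hz⟩
          have hdis : Disjoint (g k) (f k) := by
            rw [Set.disjoint_left]
            intro z hz hzf
            simp only [hgdef, Set.mem_iUnion] at hz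
            obtain ⟨i, hik, hzi⟩ := hz
            exact Set.disjoint_left.mp (hdisj (show i ≠ k by omega)) hzi hzf
          have hadd : indicatorConstLp p (hgm (k + 1)) (measure_ne_top νall _) c₀
              = indicatorConstLp p (hgm k) (measure_ne_top νall _) c₀
                + indicatorConstLp p (hmeas k) (measure_ne_top νall _) c₀ := by
            apply Lp.ext
            filter_upwards [indicatorConstLp_coeFn (p := p) (hs := hgm (k + 1))
                (hμs := measure_ne_top νall _) (c := c₀),
              Lp.coeFn_add (indicatorConstLp p (hgm k) (measure_ne_top νall _) c₀)
                (indicatorConstLp p (hmeas k) (measure_ne_top νall _) c₀),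
              indicatorConstLp_coeFn (p := p) (hs := hgm k)
                (hμs := measure_ne_top νall _) (c := c₀),
              indicatorConstLp_coeFn (p := p) (hs := hmeas k)
                (hμs := measure_ne_top νall _) (c := c₀)] with z h1 h2 h3 h4
            rw [h1, h2]
            simp only [Pi.add_apply]
            rw [h3, h4, hgu, Set.indicator_union_of_disjoint hdis]
          rw [hadd]
          exact Submodule.add_mem _ ihk (IH k (hmeas k) c₀ (measure_ne_top _ _))
      have hInt : ⋂ k, ((⋃ i, f i) \ g k) = ∅ := by
        ext z
        simp only [Set.mem_iInter, Set.mem_empty_iff_false, iff_false, not_forall]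
        by_cases hz : z ∈ ⋃ i, f i
        · obtain ⟨i, hzi⟩ := Set.mem_iUnion.mp hz
          exact ⟨i + 1, fun hmem => hmem.2
            (by simp only [hgdef, Set.mem_iUnion]; exact ⟨i, by omega, hzi⟩)⟩
        · exact ⟨0, fun hmem => hz hmem.1⟩
      have htend0 : Filter.Tendsto (fun k => νall ((⋃ i, f i) \ g k)) Filter.atTop (𝓝 0) := by
        have htd := tendsto_measure_iInter_atTop (μ := νall)
          (s := fun k => (⋃ i, f i) \ g k)
          (fun k => (ht.diff (hgm k)).nullMeasurableSet)
          (fun k l hkl => Set.diff_subset_diff_right (hgmono hkl))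
          ⟨0, measure_ne_top _ _⟩
        rw [hInt, measure_empty] at htd
        exact htd
      have htendsto : Filter.Tendsto
          (fun k => indicatorConstLp p (hgm k) (measure_ne_top νall _) c₀)
          Filter.atTop (𝓝 (indicatorConstLp p ht hμt c₀)) := by
        rw [tendsto_iff_norm_sub_tendsto_zero]
        have hnorm : ∀ k, ‖indicatorConstLp p (hgm k) (measure_ne_top νall _) c₀
            - indicatorConstLp p ht hμt c₀‖
            = ‖c₀‖ * (νall ((⋃ i, f i) \ g k)).toReal ^ (1 / p.toReal) := by
          intro k
          have hdiffeq : indicatorConstLp p (hgm k) (measure_ne_top νall _) c₀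
              - indicatorConstLp p ht hμt c₀
              = -indicatorConstLp p (ht.diff (hgm k)) (measure_ne_top νall _) c₀ := by
            apply Lp.ext
            filter_upwards [Lp.coeFn_sub (indicatorConstLp p (hgm k) (measure_ne_top νall _) c₀)
                (indicatorConstLp p ht hμt c₀),
              indicatorConstLp_coeFn (p := p) (hs := hgm k)
                (hμs := measure_ne_top νall _) (c := c₀),
              indicatorConstLp_coeFn (p := p) (hs := ht) (hμs := hμt) (c := c₀),
              Lp.coeFn_neg (indicatorConstLp p (ht.diff (hgm k)) (measure_ne_top νall _) c₀),
              indicatorConstLp_coeFn (p := p) (hs := ht.diff (hgm k))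
                (hμs := measure_ne_top νall _) (c := c₀)] with z h1 h2 h3 h4 h5
            rw [h1]
            simp only [Pi.sub_apply]
            rw [h2, h3, h4]
            simp only [Pi.neg_apply]
            rw [h5]
            have hzsub : g k ⊆ ⋃ i, f i := by
              intro z' hz'
              simp only [hgdef, Set.mem_iUnion] at hz'
              obtain ⟨i, _, hzi⟩ := hz'
              exact Set.mem_iUnion.mpr ⟨i, hzi⟩
            by_cases hz1 : z ∈ g k
            · simp [Set.indicator, hz1, hzsub hz1]
            · by_cases hz2 : z ∈ ⋃ i, f i <;> simp [Set.indicator, hz1, hz2]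
          rw [hdiffeq, norm_neg, norm_indicatorConstLp hp0 hp']; rfl
        have hlim : Filter.Tendsto
            (fun k => ‖c₀‖ * (νall ((⋃ i, f i) \ g k)).toReal ^ (1 / p.toReal))
            Filter.atTop (𝓝 0) := by
          have h1 : Filter.Tendsto (fun k => (νall ((⋃ i, f i) \ g k)).toReal)
              Filter.atTop (𝓝 0) := by
            have := (ENNReal.tendsto_toReal (by simp : (0 : ℝ≥0∞) ≠ ∞)).comp htend0
            simpa [Function.comp_def] using this
          have hpt : 0 < p.toReal := ENNReal.toReal_pos hp0 hp'
          have h2 := h1.rpow_const (p := 1 / p.toReal) (Or.inr (by positivity))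
          rw [Real.zero_rpow (by positivity)] at h2
          have h3 := h2.const_mul ‖c₀‖
          simpa using h3
        refine hlim.congr fun k => ?_
        rw [hnorm k]
      exact (Submodule.isClosed_topologicalClosure _).mem_of_tendsto htendsto
        (Filter.Eventually.of_forall hpart)
  -- Step 3: the span of TS is dense.
  have hdense_top : ∀ f : Lp ℂ p νall, f ∈ (Submodule.span ℂ TS).topologicalClosure := by
    refine Lp.induction hp'
      (motive := fun f : Lp ℂ p νall => f ∈ (Submodule.span ℂ TS).topologicalClosure) ?_ ?_ ?_
    · intro c₀ s hsm hμs
      rw [Lp.simpleFunc.coe_indicatorConst]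
      exact hind hsm hsm c₀ hμs.ne
    · intro f g hf hg _ hfm hgm
      exact Submodule.add_mem _ hfm hgm
    · exact (Submodule.isClosed_topologicalClosure _).preimage continuous_id
  have hdense : Dense ((Submodule.span ℂ TS : Submodule ℂ (Lp ℂ p νall)) : Set (Lp ℂ p νall)) :=
    Submodule.dense_iff_topologicalClosure_eq_top.mpr
      (Submodule.eq_top_iff'.mpr hdense_top)
  -- Step 4: the key computation lemma `P_j (ξ ⊗ η) = ξ ⊗ (Ptail η)` at the `Lp` level.
  have hPT : ∀ (j : ℕ) (hnj : n ≤ j) (ζ : Lp ℂ p (muLe μ n)) (η : (∀ t : ℕ, X (n + 1 + t)) → ℂ)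
      (hη : MemLp η p (νtail (n + 1)))
      (h1 : MemLp (tensFun n (⇑ζ) η) p νall)
      (h2 : MemLp (tensFun n (⇑ζ) (PtailFun νtail hnj η)) p νall),
      Phat j (MemLp.toLp _ h1) = MemLp.toLp _ h2 := by
    intro j hnj ζ η hη h1 h2
    apply Lp.ext
    calc ⇑(Phat j (MemLp.toLp _ h1)) =ᵐ[νall] PnFun νtail j ⇑(MemLp.toLp _ h1) := hPhat j _
      _ =ᵐ[νall] PnFun νtail j (tensFun n (⇑ζ) η) :=
          pnFun_congr_ae μ νall νtail hνall hνtail j (MemLp.coeFn_toLp h1)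
      _ =ᵐ[νall] ⇑(MemLp.toLp _ h2) := by
          rw [pnFun_tensFun νtail hnj]
          exact (MemLp.coeFn_toLp h2).symm
  -- Step 5: the commutation identity `P_k ∘ a ∘ P_m = a ∘ P_k ∘ P_m` for `n ≤ k ≤ m`.
  have hCop : ∀ (k m' : ℕ), n ≤ k → k ≤ m' →
      (Phat k).comp (a.comp (Phat m')) = a.comp ((Phat k).comp (Phat m')) := by
    intro k m' hnk hkm'
    have hnm' : n ≤ m' := hnk.trans hkm'
    apply ContinuousLinearMap.ext_on hdense
    rintro g ⟨ξ, η, hη, h, rfl⟩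
    simp only [ContinuousLinearMap.coe_comp', Function.comp_apply]
    have hηm : MemLp (PtailFun νtail hnm' η) p (νtail (n + 1)) :=
      memℒp_ptailFun μ νtail hνtail hp' hnm' hη
    have h1m : MemLp (tensFun n (⇑ξ) (PtailFun νtail hnm' η)) p νall :=
      memℒp_tensFun μ νall νtail hνall hνtail hp' (Lp.memLp ξ) hηm
    have h2m : MemLp (tensFun n (⇑(c ξ)) (PtailFun νtail hnm' η)) p νall :=
      memℒp_tensFun μ νall νtail hνall hνtail hp' (Lp.memLp (c ξ)) hηm
    have hηkm : MemLp (PtailFun νtail hnk (PtailFun νtail hnm' η)) p (νtail (n + 1)) :=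
      memℒp_ptailFun μ νtail hνtail hp' hnk hηm
    have h1k : MemLp (tensFun n (⇑ξ) (PtailFun νtail hnk (PtailFun νtail hnm' η))) p νall :=
      memℒp_tensFun μ νall νtail hνall hνtail hp' (Lp.memLp ξ) hηkm
    have h2k : MemLp (tensFun n (⇑(c ξ)) (PtailFun νtail hnk (PtailFun νtail hnm' η))) p νall :=
      memℒp_tensFun μ νall νtail hνall hνtail hp' (Lp.memLp (c ξ)) hηkm
    have hPm : Phat m' (MemLp.toLp _ h) = MemLp.toLp _ h1m := hPT m' hnm' ξ η hη h h1m
    have hstep2 : a (MemLp.toLp _ h1m) = MemLp.toLp _ h2m := hac ξ _ hηm h1m h2m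
    have hstep3 : Phat k (MemLp.toLp _ h2m) = MemLp.toLp _ h2k :=
      hPT k hnk (c ξ) _ hηm h2m h2k
    have hstep3' : Phat k (MemLp.toLp _ h1m) = MemLp.toLp _ h1k :=
      hPT k hnk ξ _ hηm h1m h1k
    have hstep4 : a (MemLp.toLp _ h1k) = MemLp.toLp _ h2k := hac ξ _ hηkm h1k h2k
    rw [hPm, hstep2, hstep3, hstep3', hstep4]
  -- Step 6: the `P`-semigroup property on `Lp`.
  have hA1 : ∀ j k : ℕ, k ≤ j → ∀ f : Lp ℂ p νall, Phat j (Phat k f) = Phat k f := by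
    intro j k hkj f
    apply Lp.ext
    calc ⇑(Phat j (Phat k f)) =ᵐ[νall] PnFun νtail j ⇑(Phat k f) := hPhat j _
      _ =ᵐ[νall] PnFun νtail j (PnFun νtail k ⇑f) :=
          pnFun_congr_ae μ νall νtail hνall hνtail j (hPhat k f)
      _ =ᵐ[νall] ⇑(Phat k f) := by
          rw [pnFun_pnFun νtail hkj]
          exact (hPhat k f).symm
  have hcomm : ∀ (m' : ℕ) (f : Lp ℂ p νall), Phat m' f = f → ∀ k, n ≤ k → k ≤ m' →
      Phat k (a f) = a (Phat k f) := by
    intro m' f hf k h1 h2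
    conv_lhs => rw [← hf]
    have hc := congrArg (fun T : Lp ℂ p νall →L[ℂ] Lp ℂ p νall => T f) (hCop k m' h1 h2)
    simp only [ContinuousLinearMap.coe_comp', Function.comp_apply] at hc
    rw [hc, hf]
  have hfix : ∀ (m' : ℕ) (f : Lp ℂ p νall), Phat m' f = f → ∀ j, m' ≤ j → Phat j f = f := by
    intro m' f hf j hj
    conv_lhs => rw [← hf]
    rw [hA1 j m' hj, hf]
  have hQzero : ∀ (m' : ℕ) (f : Lp ℂ p νall), Phat m' f = f → ∀ k, m' < k → Qhat k f = 0 := by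
    intro m' f hf k hk
    obtain ⟨k, rfl⟩ : ∃ k', k = k' + 1 := ⟨k - 1, by omega⟩
    rw [hQ k, ContinuousLinearMap.sub_apply, hfix m' f hf (k + 1) (by omega),
      hfix m' f hf k (by omega), sub_self]
  have hQcomm : ∀ (m' : ℕ) (f : Lp ℂ p νall), Phat m' f = f → ∀ k, n < k → k ≤ m' →
      Qhat k (a f) = a (Qhat k f) := by
    intro m' f hf k hnk hkm
    obtain ⟨k, rfl⟩ : ∃ k', k = k' + 1 := ⟨k - 1, by omega⟩
    rw [hQ k, ContinuousLinearMap.sub_apply, ContinuousLinearMap.sub_apply,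
      hcomm m' f hf (k + 1) (by omega) hkm, hcomm m' f hf k (by omega) (by omega), map_sub]
  have hpart1 : ∀ m : ℕ, n ≤ m → ∀ f : Lp ℂ p νall, Phat m f = f → Phat m (a f) = a f := by
    intro m hm f hf
    rw [hcomm m f hf m hm le_rfl, hf]
  have hpart2 : ∀ (m : ℕ) (f : Lp ℂ p νall), Phat m f = f →
      (∑ k ∈ Finset.Icc 1 (max m n), ((α k : ℂ)) • Qhat k (a f))
          - a (∑ k ∈ Finset.Icc 1 m, ((α k : ℂ)) • Qhat k f)
        = ∑ k ∈ Finset.Icc 1 n, ((α k : ℂ)) • (Qhat k (a f) - a (Qhat k f)) := by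
    intro m f hf
    have e1 : (∑ k ∈ Finset.Icc 1 m, ((α k : ℂ)) • Qhat k f)
        = ∑ k ∈ Finset.Icc 1 (max m n), ((α k : ℂ)) • Qhat k f := by
      refine Finset.sum_subset (Finset.Icc_subset_Icc le_rfl (le_max_left m n)) ?_
      intro k hk hk'
      simp only [Finset.mem_Icc] at hk hk'
      rw [hQzero m f hf k (by omega), smul_zero]
    rw [e1, map_sum]
    simp_rw [_root_.map_smul]
    rw [← Finset.sum_sub_distrib]
    simp_rw [← smul_sub]
    refine (Finset.sum_subset (Finset.Icc_subset_Icc le_rfl (le_max_right m n)) ?_).symm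
    intro k hk hk'
    simp only [Finset.mem_Icc] at hk hk'
    have hkn : n < k := by omega
    have hkm : k ≤ m := by
      have hk2 := hk.2
      rcases max_choice m n with h | h <;> rw [h] at hk2 <;> omega
    rw [hQcomm m f hf k hkn hkm, sub_self, smul_zero]
  refine ⟨hpart1, hpart2, ?_⟩
  refine ⟨∑ k ∈ Finset.Icc 1 n, ‖((α k : ℂ))‖ * (‖Qhat k‖ * ‖a‖ + ‖a‖ * ‖Qhat k‖), ?_, ?_⟩
  · apply Finset.sum_nonneg
    intro k _
    positivity
  · intro m f hf
    rw [hpart2 m f hf]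
    calc ‖∑ k ∈ Finset.Icc 1 n, ((α k : ℂ)) • (Qhat k (a f) - a (Qhat k f))‖
        ≤ ∑ k ∈ Finset.Icc 1 n, ‖((α k : ℂ)) • (Qhat k (a f) - a (Qhat k f))‖ :=
          norm_sum_le _ _
      _ ≤ ∑ k ∈ Finset.Icc 1 n,
            ‖((α k : ℂ))‖ * (‖Qhat k‖ * ‖a‖ + ‖a‖ * ‖Qhat k‖) * ‖f‖ := by
          apply Finset.sum_le_sum
          intro k _
          rw [norm_smul]
          have hb1 : ‖Qhat k (a f)‖ ≤ ‖Qhat k‖ * ‖a‖ * ‖f‖ := by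
            calc ‖Qhat k (a f)‖ ≤ ‖Qhat k‖ * ‖a f‖ := (Qhat k).le_opNorm _
              _ ≤ ‖Qhat k‖ * (‖a‖ * ‖f‖) :=
                  mul_le_mul_of_nonneg_left (a.le_opNorm f) (norm_nonneg _)
              _ = ‖Qhat k‖ * ‖a‖ * ‖f‖ := by ring
          have hb2 : ‖a (Qhat k f)‖ ≤ ‖a‖ * ‖Qhat k‖ * ‖f‖ := by
            calc ‖a (Qhat k f)‖ ≤ ‖a‖ * ‖Qhat k f‖ := a.le_opNorm _
              _ ≤ ‖a‖ * (‖Qhat k‖ * ‖f‖) :=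
                  mul_le_mul_of_nonneg_left ((Qhat k).le_opNorm f) (norm_nonneg _)
              _ = ‖a‖ * ‖Qhat k‖ * ‖f‖ := by ring
          calc ‖((α k : ℂ))‖ * ‖Qhat k (a f) - a (Qhat k f)‖
              ≤ ‖((α k : ℂ))‖ * (‖Qhat k (a f)‖ + ‖a (Qhat k f)‖) :=
                mul_le_mul_of_nonneg_left (norm_sub_le _ _) (norm_nonneg _)
            _ ≤ ‖((α k : ℂ))‖ * (‖Qhat k‖ * ‖a‖ * ‖f‖ + ‖a‖ * ‖Qhat k‖ * ‖f‖) :=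
                mul_le_mul_of_nonneg_left (add_le_add hb1 hb2) (norm_nonneg _)
            _ = ‖((α k : ℂ))‖ * (‖Qhat k‖ * ‖a‖ + ‖a‖ * ‖Qhat k‖) * ‖f‖ := by ring
      _ = (∑ k ∈ Finset.Icc 1 n, ‖((α k : ℂ))‖ * (‖Qhat k‖ * ‖a‖ + ‖a‖ * ‖Qhat k‖)) * ‖f‖ :=
          (Finset.sum_mul _ _ _).symm
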